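/- In the four-node ADT deterministic two-way function-multicast network with forward parameters (m,n) = (i, 2i) and backward parameters (m̃,ñ) = (j, 2j), for positive integers i, j with i/3 ≤ j, the rate pair (R, R̃) = ((4/3)i, j − (1/3)i) belongs to the capacity region 𝒞. -/

import Mathlib

open Matrix Filter

namespace TwoWay

/-- The `q × q` shift matrix over `𝔽₂`: entry `(i,j)` is `1` iff `i = j + 1`. -/
def shiftG (q : ℕ) : Matrix (Fin q) (Fin q) (ZMod 2) :=
  Matrix.of fun i j => if (i : ℕ) = (j : ℕ) + 1 then 1 else 0

/-- Outputs of a symmetric ADT deterministic channel pair with direct-link level `n`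
and cross-link level `m`: given inputs `x₁, x₂ ∈ 𝔽₂^{max m n}` it returns
`(Y₁, Y₂) = (G^{q-n} x₁ + G^{q-m} x₂, G^{q-m} x₁ + G^{q-n} x₂)` where `q = max m n`. -/
def chOut (m n : ℕ) (x1 x2 : Fin (max m n) → ZMod 2) :
    (Fin (max m n) → ZMod 2) × (Fin (max m n) → ZMod 2) :=
  (shiftG (max m n) ^ (max m n - n) *ᵥ x1 + shiftG (max m n) ^ (max m n - m) *ᵥ x2,
   shiftG (max m n) ^ (max m n - m) *ᵥ x1 + shiftG (max m n) ^ (max m n - n) *ᵥ x2)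

/-- A code of block length `N` for the four-node ADT deterministic two-way
function-multicast network with forward parameters `(m, n)` and backward
parameters `(mt, nt)`.  Nodes `1, 2` carry forward sources of length `K`
(encoders `f1, f2`, taking the node's own source and its past received backward
signals); nodes `1̃, 2̃` carry backward sources of length `Kt` (encoders
`ft1, ft2`).  `dect1, dect2` are the decoders at nodes `1̃, 2̃` for the forward
modulo-2 sum, and `dec1, dec2` the decoders at nodes `1, 2` for the backward
modulo-2 sum. -/
structure Code (m n mt nt : ℕ) where
  N : ℕ
  Npos : 0 < N
  K : ℕ
  Kt : ℕ
  f1 : (i : ℕ) → (Fin K → ZMod 2) → (Fin i → (Fin (max mt nt) → ZMod 2)) →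
    (Fin (max m n) → ZMod 2)
  f2 : (i : ℕ) → (Fin K → ZMod 2) → (Fin i → (Fin (max mt nt) → ZMod 2)) →
    (Fin (max m n) → ZMod 2)
  ft1 : (i : ℕ) → (Fin Kt → ZMod 2) → (Fin i → (Fin (max m n) → ZMod 2)) →
    (Fin (max mt nt) → ZMod 2)
  ft2 : (i : ℕ) → (Fin Kt → ZMod 2) → (Fin i → (Fin (max m n) → ZMod 2)) →
    (Fin (max mt nt) → ZMod 2)
  dec1 : (Fin N → (Fin (max mt nt) → ZMod 2)) → (Fin Kt → ZMod 2)
  dec2 : (Fin N → (Fin (max mt nt) → ZMod 2)) → (Fin Kt → ZMod 2)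
  dect1 : (Fin N → (Fin (max m n) → ZMod 2)) → (Fin K → ZMod 2)
  dect2 : (Fin N → (Fin (max m n) → ZMod 2)) → (Fin K → ZMod 2)

variable {m n mt nt : ℕ}

/-- The tuple of transmitted signals `(X₁ᵢ, X₂ᵢ, X̃₁ᵢ, X̃₂ᵢ)` at one time instant. -/
abbrev Sig (m n mt nt : ℕ) : Type :=
  (Fin (max m n) → ZMod 2) × (Fin (max m n) → ZMod 2) ×
  (Fin (max mt nt) → ZMod 2) × (Fin (max mt nt) → ZMod 2)

/-- One time step: the four encoders applied to the sources and the past received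
signals determined by the history `h` of transmitted signals.  Node `k`'s encoder
sees `Ỹ_k^{i-1}` and node `k̃`'s encoder sees `Y_k^{i-1}`. -/
def step (C : Code m n mt nt) (s1 s2 : Fin C.K → ZMod 2) (t1 t2 : Fin C.Kt → ZMod 2)
    (i : ℕ) (h : Fin i → Sig m n mt nt) : Sig m n mt nt :=
  (C.f1 i s1 (fun j => (chOut mt nt (h j).2.2.1 (h j).2.2.2).1),
   C.f2 i s2 (fun j => (chOut mt nt (h j).2.2.1 (h j).2.2.2).2),
   C.ft1 i t1 (fun j => (chOut m n (h j).1 (h j).2.1).1),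
   C.ft2 i t2 (fun j => (chOut m n (h j).1 (h j).2.1).2))

/-- The history of transmitted signals up to (exclusive) time `i`, determined by
the sources. -/
def hist (C : Code m n mt nt) (s1 s2 : Fin C.K → ZMod 2) (t1 t2 : Fin C.Kt → ZMod 2) :
    (i : ℕ) → Fin i → Sig m n mt nt
  | 0 => Fin.elim0
  | i + 1 => Fin.snoc (hist C s1 s2 t1 t2 i) (step C s1 s2 t1 t2 i (hist C s1 s2 t1 t2 i))

/-- Node `1̃`'s received sequence `Y₁^N`. -/
def recvF1 (C : Code m n mt nt) (s1 s2 : Fin C.K → ZMod 2) (t1 t2 : Fin C.Kt → ZMod 2) :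
    Fin C.N → Fin (max m n) → ZMod 2 :=
  fun i => (chOut m n (hist C s1 s2 t1 t2 C.N i).1 (hist C s1 s2 t1 t2 C.N i).2.1).1

/-- Node `2̃`'s received sequence `Y₂^N`. -/
def recvF2 (C : Code m n mt nt) (s1 s2 : Fin C.K → ZMod 2) (t1 t2 : Fin C.Kt → ZMod 2) :
    Fin C.N → Fin (max m n) → ZMod 2 :=
  fun i => (chOut m n (hist C s1 s2 t1 t2 C.N i).1 (hist C s1 s2 t1 t2 C.N i).2.1).2

/-- Node `1`'s received sequence `Ỹ₁^N`. -/
def recvB1 (C : Code m n mt nt) (s1 s2 : Fin C.K → ZMod 2) (t1 t2 : Fin C.Kt → ZMod 2) :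
    Fin C.N → Fin (max mt nt) → ZMod 2 :=
  fun i => (chOut mt nt (hist C s1 s2 t1 t2 C.N i).2.2.1 (hist C s1 s2 t1 t2 C.N i).2.2.2).1

/-- Node `2`'s received sequence `Ỹ₂^N`. -/
def recvB2 (C : Code m n mt nt) (s1 s2 : Fin C.K → ZMod 2) (t1 t2 : Fin C.Kt → ZMod 2) :
    Fin C.N → Fin (max mt nt) → ZMod 2 :=
  fun i => (chOut mt nt (hist C s1 s2 t1 t2 C.N i).2.2.1 (hist C s1 s2 t1 t2 C.N i).2.2.2).2

/-- The space of source realizations `(S₁^K, S₂^K, S̃₁^K̃, S̃₂^K̃)`;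
the sources are i.i.d. Bernoulli(1/2), i.e. uniform on this finite space. -/
abbrev SrcSpace (C : Code m n mt nt) : Type :=
  (Fin C.K → ZMod 2) × (Fin C.K → ZMod 2) × (Fin C.Kt → ZMod 2) × (Fin C.Kt → ZMod 2)

-- Probability of an event under the uniform (i.i.d. Bernoulli(1/2)) source
-- distribution.
open Classical in
noncomputable def probOf (C : Code m n mt nt) (E : SrcSpace C → Prop) : ℝ :=
  ((Finset.univ.filter E).card : ℝ) / (Fintype.card (SrcSpace C) : ℝ)

/-- Decoding error probability at node `1̃` (forward modulo-2 sum). -/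
noncomputable def errF1 (C : Code m n mt nt) : ℝ :=
  probOf C fun ω =>
    C.dect1 (recvF1 C ω.1 ω.2.1 ω.2.2.1 ω.2.2.2) ≠ fun k => ω.1 k + ω.2.1 k

/-- Decoding error probability at node `2̃` (forward modulo-2 sum). -/
noncomputable def errF2 (C : Code m n mt nt) : ℝ :=
  probOf C fun ω =>
    C.dect2 (recvF2 C ω.1 ω.2.1 ω.2.2.1 ω.2.2.2) ≠ fun k => ω.1 k + ω.2.1 k

/-- Decoding error probability at node `1` (backward modulo-2 sum). -/
noncomputable def errB1 (C : Code m n mt nt) : ℝ :=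
  probOf C fun ω =>
    C.dec1 (recvB1 C ω.1 ω.2.1 ω.2.2.1 ω.2.2.2) ≠ fun k => ω.2.2.1 k + ω.2.2.2 k

/-- Decoding error probability at node `2` (backward modulo-2 sum). -/
noncomputable def errB2 (C : Code m n mt nt) : ℝ :=
  probOf C fun ω =>
    C.dec2 (recvB2 C ω.1 ω.2.1 ω.2.2.1 ω.2.2.2) ≠ fun k => ω.2.2.1 k + ω.2.2.2 k

/-- A rate pair `(R, R̃) = (K/N, K̃/N)` is achievable if there is a family of codes
whose block lengths tend to infinity and whose four decoding error probabilities
tend to `0`. -/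
def Achievable (m n mt nt : ℕ) (R Rt : ℝ) : Prop :=
  ∃ Cs : ℕ → Code m n mt nt,
    Tendsto (fun ν => (Cs ν).N) atTop atTop ∧
    (∀ ν, ((Cs ν).K : ℝ) / ((Cs ν).N : ℝ) = R) ∧
    (∀ ν, ((Cs ν).Kt : ℝ) / ((Cs ν).N : ℝ) = Rt) ∧
    Tendsto (fun ν => errF1 (Cs ν)) atTop (nhds 0) ∧
    Tendsto (fun ν => errF2 (Cs ν)) atTop (nhds 0) ∧
    Tendsto (fun ν => errB1 (Cs ν)) atTop (nhds 0) ∧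
    Tendsto (fun ν => errB2 (Cs ν)) atTop (nhds 0)

/-- The computation capacity region: the closure of the set of achievable rate pairs. -/
def CapacityRegion (m n mt nt : ℕ) : Set (ℝ × ℝ) :=
  closure {p : ℝ × ℝ | Achievable m n mt nt p.1 p.2}

/-- The perfect-feedback computation capacity: `n` if `m = n`, and
`(2/3) max(m,n)` otherwise (i.e. `(2/3)n` if `m < n` and `(2/3)m` if `m > n`). -/
noncomputable def Cpf (m n : ℕ) : ℝ :=
  if m = n then (n : ℝ) else (2 / 3) * (max m n : ℝ)

section Helpers

/-- pack a top half and bottom half into a length-`max a (2a)` vector -/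
def vpack (a : ℕ) (t b : Fin a → ZMod 2) : Fin (max a (2*a)) → ZMod 2 :=
  fun k => if h : (k : ℕ) < a then t ⟨k, h⟩
    else b ⟨(k : ℕ) - a, by
      have h1 := k.isLt
      have h2 : max a (2*a) = 2*a := max_eq_right (by omega)
      omega⟩

def vtop (a : ℕ) (y : Fin (max a (2*a)) → ZMod 2) (ℓ : Fin a) : ZMod 2 :=
  y ⟨ℓ, by have := ℓ.isLt; have h2 : a ≤ max a (2*a) := le_max_left _ _; omega⟩

def vbot (a : ℕ) (y : Fin (max a (2*a)) → ZMod 2) (ℓ : Fin a) : ZMod 2 :=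
  y ⟨a + ℓ, by have := ℓ.isLt; have h2 : 2*a ≤ max a (2*a) := le_max_right _ _; omega⟩

@[simp] lemma vtop_vpack (a : ℕ) (t b : Fin a → ZMod 2) (ℓ : Fin a) :
    vtop a (vpack a t b) ℓ = t ℓ := by
  have hℓ := ℓ.isLt
  simp [vtop, vpack, hℓ]

@[simp] lemma vbot_vpack (a : ℕ) (t b : Fin a → ZMod 2) (ℓ : Fin a) :
    vbot a (vpack a t b) ℓ = b ℓ := by
  have hℓ := ℓ.isLt
  rw [vbot, vpack]
  rw [dif_neg (by simp)]
  congr 1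
  exact Fin.ext (by simp)

lemma shiftG_mulVec (q : ℕ) (x : Fin q → ZMod 2) (k : Fin q) :
    (shiftG q *ᵥ x) k
      = if h : 1 ≤ (k : ℕ) then x ⟨(k:ℕ) - 1, by have := k.isLt; omega⟩ else 0 := by
  have hk := k.isLt
  show (∑ m : Fin q, shiftG q k m * x m) = _
  simp only [shiftG, Matrix.of_apply, ite_mul, one_mul, zero_mul]
  by_cases h : 1 ≤ (k : ℕ)
  · rw [dif_pos h, Finset.sum_eq_single (⟨(k:ℕ)-1, by omega⟩ : Fin q)]
    · rw [if_pos (by simp <;> omega)]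
    · intro m _ hm
      rw [if_neg]
      intro hEq
      exact hm (Fin.ext (by simp at hEq ⊢ <;> omega))
    · exact fun h => absurd (Finset.mem_univ _) h
  · rw [dif_neg h]
    apply Finset.sum_eq_zero
    intro m _
    rw [if_neg]
    omega

lemma shiftG_pow_mulVec (q p : ℕ) (x : Fin q → ZMod 2) (k : Fin q) :
    (shiftG q ^ p *ᵥ x) k
      = if h : p ≤ (k : ℕ) then x ⟨(k:ℕ) - p, by have := k.isLt; omega⟩ else 0 := by
  induction p generalizing x with
  | zero =>
    rw [pow_zero, Matrix.one_mulVec, dif_pos (Nat.zero_le _)]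
    exact congrArg x (Fin.ext (by simp)).symm
  | succ p ih =>
    rw [pow_succ, ← Matrix.mulVec_mulVec, ih]
    by_cases h : p ≤ (k : ℕ)
    · rw [dif_pos h, shiftG_mulVec]
      by_cases h2 : p + 1 ≤ (k : ℕ)
      · rw [dif_pos (show 1 ≤ ((⟨(k:ℕ)-p, _⟩ : Fin q) : ℕ) by simp; omega), dif_pos h2]
        exact congrArg x (Fin.ext (by simp; omega))
      · rw [dif_neg (show ¬ 1 ≤ ((⟨(k:ℕ)-p, _⟩ : Fin q) : ℕ) by simp; omega), dif_neg h2]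
    · rw [dif_neg h, dif_neg (by omega)]

lemma max2_eq (a : ℕ) : max a (2*a) = 2*a := max_eq_right (by omega)

lemma chOut_parts (a : ℕ) (x1 x2 : Fin (max a (2*a)) → ZMod 2) (ℓ : Fin a) :
    vtop a (chOut a (2*a) x1 x2).1 ℓ = vtop a x1 ℓ ∧
    vbot a (chOut a (2*a) x1 x2).1 ℓ = vbot a x1 ℓ + vtop a x2 ℓ ∧
    vtop a (chOut a (2*a) x1 x2).2 ℓ = vtop a x2 ℓ ∧
    vbot a (chOut a (2*a) x1 x2).2 ℓ = vbot a x2 ℓ + vtop a x1 ℓ := by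
  have hℓ := ℓ.isLt
  have h2 := max2_eq a
  rw [chOut, show max a (2*a) - 2*a = 0 by omega, show max a (2*a) - a = a by omega]
  unfold vtop vbot
  dsimp only
  simp only [pow_zero, Matrix.one_mulVec, Pi.add_apply, shiftG_pow_mulVec]
  refine ⟨?_, ?_, ?_, ?_⟩
  · rw [dif_neg (by simp <;> omega), add_zero]
  · rw [dif_pos (by simp <;> omega)]
    congr 2
    exact Fin.ext (by simp)
  · rw [dif_neg (by simp <;> omega), zero_add]
  · rw [dif_pos (by simp <;> omega), add_comm]
    congr 2
    exact Fin.ext (by simp)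

lemma chOut1_top (a : ℕ) (x1 x2 : Fin (max a (2*a)) → ZMod 2) (ℓ : Fin a) :
    vtop a (chOut a (2*a) x1 x2).1 ℓ = vtop a x1 ℓ := (chOut_parts a x1 x2 ℓ).1

lemma chOut1_bot (a : ℕ) (x1 x2 : Fin (max a (2*a)) → ZMod 2) (ℓ : Fin a) :
    vbot a (chOut a (2*a) x1 x2).1 ℓ = vbot a x1 ℓ + vtop a x2 ℓ := (chOut_parts a x1 x2 ℓ).2.1

lemma chOut2_top (a : ℕ) (x1 x2 : Fin (max a (2*a)) → ZMod 2) (ℓ : Fin a) :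
    vtop a (chOut a (2*a) x1 x2).2 ℓ = vtop a x2 ℓ := (chOut_parts a x1 x2 ℓ).2.2.1

lemma chOut2_bot (a : ℕ) (x1 x2 : Fin (max a (2*a)) → ZMod 2) (ℓ : Fin a) :
    vbot a (chOut a (2*a) x1 x2).2 ℓ = vbot a x2 ℓ + vtop a x1 ℓ := (chOut_parts a x1 x2 ℓ).2.2.2

end Helpers

section Traj

variable {m n mt nt : ℕ}

/-- The unbounded trajectory of transmitted signals. -/
def traj (C : Code m n mt nt) (s1 s2 : Fin C.K → ZMod 2) (t1 t2 : Fin C.Kt → ZMod 2) :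
    ℕ → Sig m n mt nt :=
  fun τ => step C s1 s2 t1 t2 τ (fun k : Fin τ => traj C s1 s2 t1 t2 k)
  termination_by τ => τ
  decreasing_by exact k.isLt

lemma traj_def (C : Code m n mt nt) (s1 s2 : Fin C.K → ZMod 2) (t1 t2 : Fin C.Kt → ZMod 2)
    (τ : ℕ) :
    traj C s1 s2 t1 t2 τ
      = step C s1 s2 t1 t2 τ (fun k : Fin τ => traj C s1 s2 t1 t2 k) := by
  rw [traj]

lemma hist_traj (C : Code m n mt nt) (s1 s2 : Fin C.K → ZMod 2) (t1 t2 : Fin C.Kt → ZMod 2) :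
    ∀ (T : ℕ) (k : Fin T), hist C s1 s2 t1 t2 T k = traj C s1 s2 t1 t2 k := by
  intro T
  induction T with
  | zero => exact fun k => k.elim0
  | succ T ih =>
    intro k
    refine Fin.lastCases ?_ (fun k => ?_) k
    · show (hist C s1 s2 t1 t2 (T+1)) (Fin.last T) = _
      rw [hist, Fin.snoc_last]
      have hrw : hist C s1 s2 t1 t2 T = fun k : Fin T => traj C s1 s2 t1 t2 k := funext ih
      rw [hrw, ← traj_def]
      rfl
    · show (hist C s1 s2 t1 t2 (T+1)) k.castSucc = _
      rw [hist, Fin.snoc_castSucc, ih]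
      rfl

end Traj
section Scheme

variable (i j F S : ℕ)

/-- Node 1's forward encoder. -/
def f1d (hi : 0 < i) (hj : 0 < j) (hij : i ≤ 3*j)
    (s : Fin (4*i*F) → ZMod 2) (τ : ℕ)
    (yb : Fin τ → (Fin (max j (2*j)) → ZMod 2)) : Fin (max i (2*i)) → ZMod 2 :=
  if h0 : τ % 3 = 0 then
    if hr : τ/3 < F then
      vpack i (fun ℓ => s ⟨4*i*(τ/3) + 1*i + ℓ, by
          have := ℓ.isLt
          have h4 : 4*i*(τ/3) + 4*i ≤ 4*i*F := by
            calc 4*i*(τ/3) + 4*i = 4*i*(τ/3+1) := by ring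
            _ ≤ 4*i*F := Nat.mul_le_mul_left _ hr
          omega⟩)
        (fun ℓ => s ⟨4*i*(τ/3) + 0*i + ℓ, by
          have := ℓ.isLt
          have h4 : 4*i*(τ/3) + 4*i ≤ 4*i*F := by
            calc 4*i*(τ/3) + 4*i = 4*i*(τ/3+1) := by ring
            _ ≤ 4*i*F := Nat.mul_le_mul_left _ hr
          omega⟩)
    else 0
  else if h1 : τ % 3 = 1 then
    if hr : τ/3 < F then
      vpack i (fun ℓ => s ⟨4*i*(τ/3) + 3*i + ℓ, by
          have := ℓ.isLt
          have h4 : 4*i*(τ/3) + 4*i ≤ 4*i*F := by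
            calc 4*i*(τ/3) + 4*i = 4*i*(τ/3+1) := by ring
            _ ≤ 4*i*F := Nat.mul_le_mul_left _ hr
          omega⟩)
        (fun ℓ => s ⟨4*i*(τ/3) + 2*i + ℓ, by
          have := ℓ.isLt
          have h4 : 4*i*(τ/3) + 4*i ≤ 4*i*F := by
            calc 4*i*(τ/3) + 4*i = 4*i*(τ/3+1) := by ring
            _ ≤ 4*i*F := Nat.mul_le_mul_left _ hr
          omega⟩)
    else 0
  else
    if hp : 1 ≤ τ/3 ∧ τ/3 - 1 < F then
      vpack i (fun ℓ =>
        yb ⟨3*(τ/3-1) + 2 + (ℓ:ℕ) % 3, by omega⟩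
          ⟨j + (ℓ:ℕ)/3, by
            have := ℓ.isLt
            have h2 : 2*j ≤ max j (2*j) := le_max_right _ _
            omega⟩
        + s ⟨4*i*(τ/3-1) + 2*i + ℓ, by
          have := ℓ.isLt
          have h4 : 4*i*(τ/3-1) + 4*i ≤ 4*i*F := by
            calc 4*i*(τ/3-1) + 4*i = 4*i*(τ/3-1+1) := by ring
            _ ≤ 4*i*F := Nat.mul_le_mul_left _ (by omega)
          omega⟩) 0
    else 0

/-- Node 2's forward encoder. -/
def f2d (hi : 0 < i) (hj : 0 < j) (hij : i ≤ 3*j)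
    (s : Fin (4*i*F) → ZMod 2) (τ : ℕ)
    (yb : Fin τ → (Fin (max j (2*j)) → ZMod 2)) : Fin (max i (2*i)) → ZMod 2 :=
  if h0 : τ % 3 = 0 then
    if hr : τ/3 < F then
      vpack i (fun ℓ => s ⟨4*i*(τ/3) + 0*i + ℓ, by
          have := ℓ.isLt
          have h4 : 4*i*(τ/3) + 4*i ≤ 4*i*F := by
            calc 4*i*(τ/3) + 4*i = 4*i*(τ/3+1) := by ring
            _ ≤ 4*i*F := Nat.mul_le_mul_left _ hr
          omega⟩)
        (fun ℓ => s ⟨4*i*(τ/3) + 1*i + ℓ, by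
          have := ℓ.isLt
          have h4 : 4*i*(τ/3) + 4*i ≤ 4*i*F := by
            calc 4*i*(τ/3) + 4*i = 4*i*(τ/3+1) := by ring
            _ ≤ 4*i*F := Nat.mul_le_mul_left _ hr
          omega⟩)
    else 0
  else if h1 : τ % 3 = 1 then
    if hr : τ/3 < F then
      vpack i (fun ℓ => s ⟨4*i*(τ/3) + 2*i + ℓ, by
          have := ℓ.isLt
          have h4 : 4*i*(τ/3) + 4*i ≤ 4*i*F := by
            calc 4*i*(τ/3) + 4*i = 4*i*(τ/3+1) := by ring
            _ ≤ 4*i*F := Nat.mul_le_mul_left _ hr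
          omega⟩)
        (fun ℓ => s ⟨4*i*(τ/3) + 3*i + ℓ, by
          have := ℓ.isLt
          have h4 : 4*i*(τ/3) + 4*i ≤ 4*i*F := by
            calc 4*i*(τ/3) + 4*i = 4*i*(τ/3+1) := by ring
            _ ≤ 4*i*F := Nat.mul_le_mul_left _ hr
          omega⟩)
    else 0
  else
    if hp : 1 ≤ τ/3 ∧ τ/3 - 1 < F then
      vpack i (fun ℓ =>
        yb ⟨3*(τ/3-1) + 2 + (ℓ:ℕ) % 3, by omega⟩
          ⟨j + (ℓ:ℕ)/3, by
            have := ℓ.isLt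
            have h2 : 2*j ≤ max j (2*j) := le_max_right _ _
            omega⟩
        + s ⟨4*i*(τ/3-1) + 1*i + ℓ, by
          have := ℓ.isLt
          have h4 : 4*i*(τ/3-1) + 4*i ≤ 4*i*F := by
            calc 4*i*(τ/3-1) + 4*i = 4*i*(τ/3-1+1) := by ring
            _ ≤ 4*i*F := Nat.mul_le_mul_left _ (by omega)
          omega⟩) 0
    else 0

/-- Feedback content of node 1̃'s backward encoder at slot `(τ, k)` with `c := 3k + (τ+1)%3 < i`:
it is `Y₁(3r)[i+c] + Y₁(3r)[c]` where `r = (τ-2)/3`. -/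
def ft1d (hi : 0 < i) (hj : 0 < j) (hij : i ≤ 3*j)
    (t : Fin ((3*j-i)*S) → ZMod 2) (τ : ℕ)
    (y : Fin τ → (Fin (max i (2*i)) → ZMod 2)) : Fin (max j (2*j)) → ZMod 2 :=
  vpack j
    (fun k =>
      if hc : 3*(k:ℕ) + (τ+1) % 3 < i then
        if ha : 2 ≤ τ ∧ (τ-2)/3 < F then
          y ⟨3*((τ-2)/3), by omega⟩
            ⟨i + (3*(k:ℕ) + (τ+1) % 3), by
              have h2 : 2*i ≤ max i (2*i) := le_max_right _ _
              omega⟩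
          + y ⟨3*((τ-2)/3), by omega⟩
            ⟨3*(k:ℕ) + (τ+1) % 3, by
              have h2 : i ≤ max i (2*i) := le_max_left _ _
              omega⟩
        else 0
      else
        if hτ : τ < 3*S then
          t ⟨(τ/3)*(3*j-i) + (3*(k:ℕ) + (τ+1) % 3 - i), by
            have hk := k.isLt
            have h4 : (τ/3)*(3*j-i) + (3*j-i) ≤ S*(3*j-i) := by
              calc (τ/3)*(3*j-i) + (3*j-i) = (τ/3+1)*(3*j-i) := by ring
              _ ≤ S*(3*j-i) := Nat.mul_le_mul_right _ (by omega)
            have h5 : S*(3*j-i) = (3*j-i)*S := by ring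
            omega⟩
        else 0)
    (fun k =>
      if hc : 3*(k:ℕ) + (τ+1) % 3 < i then 0
      else
        if hτ : τ < 3*S then
          t ⟨(τ/3)*(3*j-i) + (3*(k:ℕ) + (τ+1) % 3 - i), by
            have hk := k.isLt
            have h4 : (τ/3)*(3*j-i) + (3*j-i) ≤ S*(3*j-i) := by
              calc (τ/3)*(3*j-i) + (3*j-i) = (τ/3+1)*(3*j-i) := by ring
              _ ≤ S*(3*j-i) := Nat.mul_le_mul_right _ (by omega)
            have h5 : S*(3*j-i) = (3*j-i)*S := by ring
            omega⟩
        else 0)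

/-- Node 2̃'s backward encoder: feedback reads `Y₂(3r+1)`. -/
def ft2d (hi : 0 < i) (hj : 0 < j) (hij : i ≤ 3*j)
    (t : Fin ((3*j-i)*S) → ZMod 2) (τ : ℕ)
    (y : Fin τ → (Fin (max i (2*i)) → ZMod 2)) : Fin (max j (2*j)) → ZMod 2 :=
  vpack j
    (fun k =>
      if hc : 3*(k:ℕ) + (τ+1) % 3 < i then
        if ha : 2 ≤ τ ∧ (τ-2)/3 < F then
          y ⟨3*((τ-2)/3) + 1, by omega⟩
            ⟨i + (3*(k:ℕ) + (τ+1) % 3), by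
              have h2 : 2*i ≤ max i (2*i) := le_max_right _ _
              omega⟩
          + y ⟨3*((τ-2)/3) + 1, by omega⟩
            ⟨3*(k:ℕ) + (τ+1) % 3, by
              have h2 : i ≤ max i (2*i) := le_max_left _ _
              omega⟩
        else 0
      else
        if hτ : τ < 3*S then
          t ⟨(τ/3)*(3*j-i) + (3*(k:ℕ) + (τ+1) % 3 - i), by
            have hk := k.isLt
            have h4 : (τ/3)*(3*j-i) + (3*j-i) ≤ S*(3*j-i) := by
              calc (τ/3)*(3*j-i) + (3*j-i) = (τ/3+1)*(3*j-i) := by ring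
              _ ≤ S*(3*j-i) := Nat.mul_le_mul_right _ (by omega)
            have h5 : S*(3*j-i) = (3*j-i)*S := by ring
            omega⟩
        else 0)
    (fun k =>
      if hc : 3*(k:ℕ) + (τ+1) % 3 < i then 0
      else
        if hτ : τ < 3*S then
          t ⟨(τ/3)*(3*j-i) + (3*(k:ℕ) + (τ+1) % 3 - i), by
            have hk := k.isLt
            have h4 : (τ/3)*(3*j-i) + (3*j-i) ≤ S*(3*j-i) := by
              calc (τ/3)*(3*j-i) + (3*j-i) = (τ/3+1)*(3*j-i) := by ring
              _ ≤ S*(3*j-i) := Nat.mul_le_mul_right _ (by omega)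
            have h5 : S*(3*j-i) = (3*j-i)*S := by ring
            omega⟩
        else 0)

/-- Forward-sum decoder at node 1̃. -/
def dect1d (hi : 0 < i) (hFS : F < S)
    (y : Fin (3*S) → (Fin (max i (2*i)) → ZMod 2)) (k : Fin (4*i*F)) : ZMod 2 :=
  have hik : (k:ℕ) < 4*i*F := k.isLt
  have hr : (k:ℕ)/(4*i) < F := by
    rw [Nat.div_lt_iff_lt_mul (by omega)]
    calc (k:ℕ) < 4*i*F := hik
    _ = F*(4*i) := by ring
  have hℓ : ((k:ℕ) % (4*i)) % i < i := Nat.mod_lt _ hi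
  have hmax : i ≤ max i (2*i) := le_max_left _ _
  have hmax2 : 2*i ≤ max i (2*i) := le_max_right _ _
  let r := (k:ℕ)/(4*i)
  let b := ((k:ℕ) % (4*i))/i
  let ℓ := ((k:ℕ) % (4*i)) % i
  if b = 0 then y ⟨3*r, by omega⟩ ⟨i+ℓ, by omega⟩
  else if b = 1 then y ⟨3*r+5, by omega⟩ ⟨i+ℓ, by omega⟩ + y ⟨3*r, by omega⟩ ⟨i+ℓ, by omega⟩
  else if b = 2 then y ⟨3*r+1, by omega⟩ ⟨i+ℓ, by omega⟩
  else y ⟨3*r+5, by omega⟩ ⟨ℓ, by omega⟩ + y ⟨3*r+1, by omega⟩ ⟨i+ℓ, by omega⟩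

/-- Forward-sum decoder at node 2̃. -/
def dect2d (hi : 0 < i) (hFS : F < S)
    (y : Fin (3*S) → (Fin (max i (2*i)) → ZMod 2)) (k : Fin (4*i*F)) : ZMod 2 :=
  have hik : (k:ℕ) < 4*i*F := k.isLt
  have hr : (k:ℕ)/(4*i) < F := by
    rw [Nat.div_lt_iff_lt_mul (by omega)]
    calc (k:ℕ) < 4*i*F := hik
    _ = F*(4*i) := by ring
  have hℓ : ((k:ℕ) % (4*i)) % i < i := Nat.mod_lt _ hi
  have hmax : i ≤ max i (2*i) := le_max_left _ _
  have hmax2 : 2*i ≤ max i (2*i) := le_max_right _ _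
  let r := (k:ℕ)/(4*i)
  let b := ((k:ℕ) % (4*i))/i
  let ℓ := ((k:ℕ) % (4*i)) % i
  if b = 0 then y ⟨3*r+5, by omega⟩ ⟨ℓ, by omega⟩ + y ⟨3*r, by omega⟩ ⟨i+ℓ, by omega⟩
  else if b = 1 then y ⟨3*r, by omega⟩ ⟨i+ℓ, by omega⟩
  else if b = 2 then y ⟨3*r+5, by omega⟩ ⟨i+ℓ, by omega⟩ + y ⟨3*r+1, by omega⟩ ⟨i+ℓ, by omega⟩
  else y ⟨3*r+1, by omega⟩ ⟨i+ℓ, by omega⟩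

/-- Backward-sum decoder (used at both node 1 and node 2). -/
def dec1d (hj : 0 < j) (hij : i ≤ 3*j)
    (yb : Fin (3*S) → (Fin (max j (2*j)) → ZMod 2)) (m : Fin ((3*j-i)*S)) : ZMod 2 :=
  have hm : (m:ℕ) < (3*j-i)*S := m.isLt
  have hD : 0 < 3*j-i := by
    rcases Nat.eq_zero_or_pos (3*j-i) with h | h
    · simp [h] at hm
    · exact h
  have hg : (m:ℕ)/(3*j-i) < S := by
    rw [Nat.div_lt_iff_lt_mul hD]
    calc (m:ℕ) < (3*j-i)*S := hm
    _ = S*(3*j-i) := by ring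
  have hc : (m:ℕ) % (3*j-i) < 3*j-i := Nat.mod_lt _ hD
  have hmax2 : 2*j ≤ max j (2*j) := le_max_right _ _
  let g := (m:ℕ)/(3*j-i)
  let c := (m:ℕ) % (3*j-i) + i
  yb ⟨3*g + (c % 3 + 2) % 3, by omega⟩ ⟨j + c/3, by omega⟩

/-- The achievability scheme as a `Code`. -/
def myCode (hi : 0 < i) (hj : 0 < j) (hij : i ≤ 3*j) (hFS : F < S) :
    Code i (2*i) j (2*j) where
  N := 3*S
  Npos := by omega
  K := 4*i*F
  Kt := (3*j-i)*S
  f1 := fun τ s yb => f1d i j F hi hj hij s τ yb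
  f2 := fun τ s yb => f2d i j F hi hj hij s τ yb
  ft1 := fun τ t y => ft1d i j F S hi hj hij t τ y
  ft2 := fun τ t y => ft2d i j F S hi hj hij t τ y
  dec1 := fun yb => fun m => dec1d i j S hj hij yb m
  dec2 := fun yb => fun m => dec1d i j S hj hij yb m
  dect1 := fun y => fun k => dect1d i F S hi hFS y k
  dect2 := fun y => fun k => dect2d i F S hi hFS y k

end Scheme
section Eval

variable (i j F S : ℕ) (hi : 0 < i) (hj : 0 < j) (hij : i ≤ 3*j) (hFS : F < S)
variable (s1 s2 : Fin (4*i*F) → ZMod 2) (b1 b2 : Fin ((3*j-i)*S) → ZMod 2)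

/-- trajectory of the scheme -/
def trjX (τ : ℕ) : Sig i (2*i) j (2*j) :=
  traj (myCode i j F S hi hj hij hFS) s1 s2 b1 b2 τ

def rYF1 (τ : ℕ) : Fin (max i (2*i)) → ZMod 2 :=
  (chOut i (2*i) (trjX i j F S hi hj hij hFS s1 s2 b1 b2 τ).1
    (trjX i j F S hi hj hij hFS s1 s2 b1 b2 τ).2.1).1

def rYF2 (τ : ℕ) : Fin (max i (2*i)) → ZMod 2 :=
  (chOut i (2*i) (trjX i j F S hi hj hij hFS s1 s2 b1 b2 τ).1
    (trjX i j F S hi hj hij hFS s1 s2 b1 b2 τ).2.1).2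

def rZB1 (τ : ℕ) : Fin (max j (2*j)) → ZMod 2 :=
  (chOut j (2*j) (trjX i j F S hi hj hij hFS s1 s2 b1 b2 τ).2.2.1
    (trjX i j F S hi hj hij hFS s1 s2 b1 b2 τ).2.2.2).1

def rZB2 (τ : ℕ) : Fin (max j (2*j)) → ZMod 2 :=
  (chOut j (2*j) (trjX i j F S hi hj hij hFS s1 s2 b1 b2 τ).2.2.1
    (trjX i j F S hi hj hij hFS s1 s2 b1 b2 τ).2.2.2).2

end Eval

section Eval2

variable {i j F S : ℕ} (hi : 0 < i) (hj : 0 < j) (hij : i ≤ 3*j) (hFS : F < S)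
variable (s1 s2 : Fin (4*i*F) → ZMod 2) (b1 b2 : Fin ((3*j-i)*S) → ZMod 2)

local notation "XX" => trjX i j F S hi hj hij hFS s1 s2 b1 b2
local notation "YF1" => rYF1 i j F S hi hj hij hFS s1 s2 b1 b2
local notation "YF2" => rYF2 i j F S hi hj hij hFS s1 s2 b1 b2
local notation "ZB1" => rZB1 i j F S hi hj hij hFS s1 s2 b1 b2
local notation "ZB2" => rZB2 i j F S hi hj hij hFS s1 s2 b1 b2

lemma idx4_lt {i F : ℕ} (r blk : ℕ) (hr : r < F) (hb : blk < 4) (ℓv : ℕ) (hℓ : ℓv < i) :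
    4*i*r + blk*i + ℓv < 4*i*F := by
  have h1 : blk*i + i ≤ 4*i := by
    calc blk*i + i = (blk+1)*i := by ring
    _ ≤ 4*i := Nat.mul_le_mul_right _ (by omega)
  have h2 : 4*i*r + 4*i ≤ 4*i*F := by
    calc 4*i*r + 4*i = 4*i*(r+1) := by ring
    _ ≤ 4*i*F := Nat.mul_le_mul_left _ (by omega)
  omega

lemma X_unfold (τ : ℕ) : XX τ =
    (f1d i j F hi hj hij s1 τ (fun k : Fin τ => ZB1 (k:ℕ)),
     f2d i j F hi hj hij s2 τ (fun k : Fin τ => ZB2 (k:ℕ)),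
     ft1d i j F S hi hj hij b1 τ (fun k : Fin τ => YF1 (k:ℕ)),
     ft2d i j F S hi hj hij b2 τ (fun k : Fin τ => YF2 (k:ℕ))) := by
  show traj (myCode i j F S hi hj hij hFS) s1 s2 b1 b2 τ = _
  exact (traj_def (myCode i j F S hi hj hij hFS) s1 s2 b1 b2 τ).trans rfl

lemma A1 (r : ℕ) (hr : r < F) (ℓ : Fin i) :
    vtop i (YF1 (3*r)) ℓ = s1 ⟨4*i*r + 1*i + ℓ, idx4_lt r 1 hr (by omega) ℓ ℓ.isLt⟩ := by
  have e0 : (3*r) % 3 = 0 := by omega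
  have e1 : (3*r)/3 = r := by omega
  rw [show YF1 (3*r) = (chOut i (2*i) (XX (3*r)).1 (XX (3*r)).2.1).1 from rfl]
  rw [chOut1_top, X_unfold]
  dsimp only
  rw [f1d, dif_pos e0, dif_pos (show (3*r)/3 < F by omega), vtop_vpack]
  exact congrArg s1 (Fin.ext (by simp [e1]))
lemma A2 (r : ℕ) (hr : r < F) (ℓ : Fin i) :
    vbot i (YF1 (3*r)) ℓ
      = s1 ⟨4*i*r + 0*i + ℓ, idx4_lt r 0 hr (by omega) ℓ ℓ.isLt⟩
        + s2 ⟨4*i*r + 0*i + ℓ, idx4_lt r 0 hr (by omega) ℓ ℓ.isLt⟩ := by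
  have e0 : (3*r) % 3 = 0 := by omega
  have e1 : (3*r)/3 = r := by omega
  have hr' : (3*r)/3 < F := by omega
  rw [show YF1 (3*r) = (chOut i (2*i) (XX (3*r)).1 (XX (3*r)).2.1).1 from rfl]
  rw [chOut1_bot, X_unfold]
  dsimp only
  rw [f1d, dif_pos e0, dif_pos hr', vbot_vpack]
  rw [f2d, dif_pos e0, dif_pos hr', vtop_vpack]
  simp only [e1]

lemma A3 (r : ℕ) (hr : r < F) (ℓ : Fin i) :
    vtop i (YF2 (3*r)) ℓ = s2 ⟨4*i*r + 0*i + ℓ, idx4_lt r 0 hr (by omega) ℓ ℓ.isLt⟩ := by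
  have e0 : (3*r) % 3 = 0 := by omega
  have e1 : (3*r)/3 = r := by omega
  have hr' : (3*r)/3 < F := by omega
  rw [show YF2 (3*r) = (chOut i (2*i) (XX (3*r)).1 (XX (3*r)).2.1).2 from rfl]
  rw [chOut2_top, X_unfold]
  dsimp only
  rw [f2d, dif_pos e0, dif_pos hr', vtop_vpack]
  simp only [e1]

lemma A4 (r : ℕ) (hr : r < F) (ℓ : Fin i) :
    vbot i (YF2 (3*r)) ℓ
      = s2 ⟨4*i*r + 1*i + ℓ, idx4_lt r 1 hr (by omega) ℓ ℓ.isLt⟩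
        + s1 ⟨4*i*r + 1*i + ℓ, idx4_lt r 1 hr (by omega) ℓ ℓ.isLt⟩ := by
  have e0 : (3*r) % 3 = 0 := by omega
  have e1 : (3*r)/3 = r := by omega
  have hr' : (3*r)/3 < F := by omega
  rw [show YF2 (3*r) = (chOut i (2*i) (XX (3*r)).1 (XX (3*r)).2.1).2 from rfl]
  rw [chOut2_bot, X_unfold]
  dsimp only
  rw [f2d, dif_pos e0, dif_pos hr', vbot_vpack]
  rw [f1d, dif_pos e0, dif_pos hr', vtop_vpack]
  simp only [e1]

lemma A5 (r : ℕ) (hr : r < F) (ℓ : Fin i) :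
    vtop i (YF1 (3*r+1)) ℓ = s1 ⟨4*i*r + 3*i + ℓ, idx4_lt r 3 hr (by omega) ℓ ℓ.isLt⟩ := by
  have e0 : ¬ ((3*r+1) % 3 = 0) := by omega
  have e1' : (3*r+1) % 3 = 1 := by omega
  have e1 : (3*r+1)/3 = r := by omega
  have hr' : (3*r+1)/3 < F := by omega
  rw [show YF1 (3*r+1) = (chOut i (2*i) (XX (3*r+1)).1 (XX (3*r+1)).2.1).1 from rfl]
  rw [chOut1_top, X_unfold]
  dsimp only
  rw [f1d, dif_neg e0, dif_pos e1', dif_pos hr', vtop_vpack]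
  simp only [e1]

lemma A6 (r : ℕ) (hr : r < F) (ℓ : Fin i) :
    vbot i (YF1 (3*r+1)) ℓ
      = s1 ⟨4*i*r + 2*i + ℓ, idx4_lt r 2 hr (by omega) ℓ ℓ.isLt⟩
        + s2 ⟨4*i*r + 2*i + ℓ, idx4_lt r 2 hr (by omega) ℓ ℓ.isLt⟩ := by
  have e0 : ¬ ((3*r+1) % 3 = 0) := by omega
  have e1' : (3*r+1) % 3 = 1 := by omega
  have e1 : (3*r+1)/3 = r := by omega
  have hr' : (3*r+1)/3 < F := by omega
  rw [show YF1 (3*r+1) = (chOut i (2*i) (XX (3*r+1)).1 (XX (3*r+1)).2.1).1 from rfl]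
  rw [chOut1_bot, X_unfold]
  dsimp only
  rw [f1d, dif_neg e0, dif_pos e1', dif_pos hr', vbot_vpack]
  rw [f2d, dif_neg e0, dif_pos e1', dif_pos hr', vtop_vpack]
  simp only [e1]

lemma A7 (r : ℕ) (hr : r < F) (ℓ : Fin i) :
    vtop i (YF2 (3*r+1)) ℓ = s2 ⟨4*i*r + 2*i + ℓ, idx4_lt r 2 hr (by omega) ℓ ℓ.isLt⟩ := by
  have e0 : ¬ ((3*r+1) % 3 = 0) := by omega
  have e1' : (3*r+1) % 3 = 1 := by omega
  have e1 : (3*r+1)/3 = r := by omega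
  have hr' : (3*r+1)/3 < F := by omega
  rw [show YF2 (3*r+1) = (chOut i (2*i) (XX (3*r+1)).1 (XX (3*r+1)).2.1).2 from rfl]
  rw [chOut2_top, X_unfold]
  dsimp only
  rw [f2d, dif_neg e0, dif_pos e1', dif_pos hr', vtop_vpack]
  simp only [e1]

lemma A8 (r : ℕ) (hr : r < F) (ℓ : Fin i) :
    vbot i (YF2 (3*r+1)) ℓ
      = s2 ⟨4*i*r + 3*i + ℓ, idx4_lt r 3 hr (by omega) ℓ ℓ.isLt⟩
        + s1 ⟨4*i*r + 3*i + ℓ, idx4_lt r 3 hr (by omega) ℓ ℓ.isLt⟩ := by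
  have e0 : ¬ ((3*r+1) % 3 = 0) := by omega
  have e1' : (3*r+1) % 3 = 1 := by omega
  have e1 : (3*r+1)/3 = r := by omega
  have hr' : (3*r+1)/3 < F := by omega
  rw [show YF2 (3*r+1) = (chOut i (2*i) (XX (3*r+1)).1 (XX (3*r+1)).2.1).2 from rfl]
  rw [chOut2_bot, X_unfold]
  dsimp only
  rw [f2d, dif_neg e0, dif_pos e1', dif_pos hr', vbot_vpack]
  rw [f1d, dif_neg e0, dif_pos e1', dif_pos hr', vtop_vpack]
  simp only [e1]
lemma B1 (p c : ℕ) (hp : p < F) (hc : c < i) :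
    vbot j (ZB1 (3*p+2+c%3)) ⟨c/3, by omega⟩
      = (s2 ⟨4*i*p + 3*i + c, idx4_lt p 3 hp (by omega) c hc⟩
          + s1 ⟨4*i*p + 3*i + c, idx4_lt p 3 hp (by omega) c hc⟩)
        + s2 ⟨4*i*p + 2*i + c, idx4_lt p 2 hp (by omega) c hc⟩ := by
  rw [show ZB1 (3*p+2+c%3)
      = (chOut j (2*j) (XX (3*p+2+c%3)).2.2.1 (XX (3*p+2+c%3)).2.2.2).1 from rfl]
  rw [chOut1_bot, X_unfold]
  dsimp only
  rw [ft1d, ft2d, vbot_vpack, vtop_vpack]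
  dsimp only
  have hceq : 3*(c/3) + (3*p+2+c%3+1) % 3 = c := by omega
  simp only [hceq]
  rw [dif_pos hc, dif_pos hc]
  rw [dif_pos (show 2 ≤ 3*p+2+c%3 ∧ (3*p+2+c%3-2)/3 < F from ⟨by omega, by omega⟩)]
  have het : (3*p+2+c%3-2)/3 = p := by omega
  simp only [het]
  rw [show (YF2 (3*p+1)) ⟨i + c, by have h2 : 2*i ≤ max i (2*i) := le_max_right _ _; omega⟩
      = vbot i (YF2 (3*p+1)) ⟨c, hc⟩ from rfl]
  rw [show (YF2 (3*p+1)) ⟨c, by have h2 : i ≤ max i (2*i) := le_max_left _ _; omega⟩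
      = vtop i (YF2 (3*p+1)) ⟨c, hc⟩ from rfl]
  rw [A8 hi hj hij hFS s1 s2 b1 b2 p hp ⟨c, hc⟩, A7 hi hj hij hFS s1 s2 b1 b2 p hp ⟨c, hc⟩]
  rw [zero_add]

lemma B2 (p c : ℕ) (hp : p < F) (hc : c < i) :
    vbot j (ZB2 (3*p+2+c%3)) ⟨c/3, by omega⟩
      = (s1 ⟨4*i*p + 0*i + c, idx4_lt p 0 hp (by omega) c hc⟩
          + s2 ⟨4*i*p + 0*i + c, idx4_lt p 0 hp (by omega) c hc⟩)
        + s1 ⟨4*i*p + 1*i + c, idx4_lt p 1 hp (by omega) c hc⟩ := by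
  rw [show ZB2 (3*p+2+c%3)
      = (chOut j (2*j) (XX (3*p+2+c%3)).2.2.1 (XX (3*p+2+c%3)).2.2.2).2 from rfl]
  rw [chOut2_bot, X_unfold]
  dsimp only
  rw [ft1d, ft2d, vbot_vpack, vtop_vpack]
  dsimp only
  have hceq : 3*(c/3) + (3*p+2+c%3+1) % 3 = c := by omega
  simp only [hceq]
  rw [dif_pos hc, dif_pos hc]
  rw [dif_pos (show 2 ≤ 3*p+2+c%3 ∧ (3*p+2+c%3-2)/3 < F from ⟨by omega, by omega⟩)]
  have het : (3*p+2+c%3-2)/3 = p := by omega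
  simp only [het]
  rw [show (YF1 (3*p)) ⟨i + c, by have h2 : 2*i ≤ max i (2*i) := le_max_right _ _; omega⟩
      = vbot i (YF1 (3*p)) ⟨c, hc⟩ from rfl]
  rw [show (YF1 (3*p)) ⟨c, by have h2 : i ≤ max i (2*i) := le_max_left _ _; omega⟩
      = vtop i (YF1 (3*p)) ⟨c, hc⟩ from rfl]
  rw [A2 hi hj hij hFS s1 s2 b1 b2 p hp ⟨c, hc⟩, A1 hi hj hij hFS s1 s2 b1 b2 p hp ⟨c, hc⟩]
  rw [zero_add]
lemma C1 (p : ℕ) (hp : p < F) (ℓ : Fin i) :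
    vtop i (YF1 (3*p+5)) ℓ
      = s2 ⟨4*i*p + 3*i + ℓ, idx4_lt p 3 hp (by omega) ℓ ℓ.isLt⟩
        + s1 ⟨4*i*p + 3*i + ℓ, idx4_lt p 3 hp (by omega) ℓ ℓ.isLt⟩
        + s2 ⟨4*i*p + 2*i + ℓ, idx4_lt p 2 hp (by omega) ℓ ℓ.isLt⟩
        + s1 ⟨4*i*p + 2*i + ℓ, idx4_lt p 2 hp (by omega) ℓ ℓ.isLt⟩ := by
  have e0 : ¬ ((3*p+5) % 3 = 0) := by omega
  have e1 : ¬ ((3*p+5) % 3 = 1) := by omega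
  have hp' : 1 ≤ (3*p+5)/3 ∧ (3*p+5)/3 - 1 < F := ⟨by omega, by omega⟩
  have ep : (3*p+5)/3 - 1 = p := by omega
  rw [show YF1 (3*p+5) = (chOut i (2*i) (XX (3*p+5)).1 (XX (3*p+5)).2.1).1 from rfl]
  rw [chOut1_top, X_unfold]
  dsimp only
  rw [f1d, dif_neg e0, dif_neg e1, dif_pos hp', vtop_vpack]
  simp only [ep]
  rw [show rZB1 i j F S hi hj hij hFS s1 s2 b1 b2 (3*p+2+(ℓ:ℕ)%3)
        ⟨j + (ℓ:ℕ)/3, by have h2 : 2*j ≤ max j (2*j) := le_max_right _ _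
                         have := ℓ.isLt; omega⟩
      = vbot j (ZB1 (3*p+2+(ℓ:ℕ)%3)) ⟨(ℓ:ℕ)/3, by have := ℓ.isLt; omega⟩ from rfl]
  rw [B1 hi hj hij hFS s1 s2 b1 b2 p (ℓ:ℕ) hp ℓ.isLt]

lemma C2 (p : ℕ) (hp : p < F) (ℓ : Fin i) :
    vbot i (YF1 (3*p+5)) ℓ
      = s1 ⟨4*i*p + 0*i + ℓ, idx4_lt p 0 hp (by omega) ℓ ℓ.isLt⟩
        + s2 ⟨4*i*p + 0*i + ℓ, idx4_lt p 0 hp (by omega) ℓ ℓ.isLt⟩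
        + s1 ⟨4*i*p + 1*i + ℓ, idx4_lt p 1 hp (by omega) ℓ ℓ.isLt⟩
        + s2 ⟨4*i*p + 1*i + ℓ, idx4_lt p 1 hp (by omega) ℓ ℓ.isLt⟩ := by
  have e0 : ¬ ((3*p+5) % 3 = 0) := by omega
  have e1 : ¬ ((3*p+5) % 3 = 1) := by omega
  have hp' : 1 ≤ (3*p+5)/3 ∧ (3*p+5)/3 - 1 < F := ⟨by omega, by omega⟩
  have ep : (3*p+5)/3 - 1 = p := by omega
  rw [show YF1 (3*p+5) = (chOut i (2*i) (XX (3*p+5)).1 (XX (3*p+5)).2.1).1 from rfl]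
  rw [chOut1_bot, X_unfold]
  dsimp only
  rw [f1d, dif_neg e0, dif_neg e1, dif_pos hp', vbot_vpack]
  rw [f2d, dif_neg e0, dif_neg e1, dif_pos hp', vtop_vpack]
  simp only [ep]
  rw [show rZB2 i j F S hi hj hij hFS s1 s2 b1 b2 (3*p+2+(ℓ:ℕ)%3)
        ⟨j + (ℓ:ℕ)/3, by have h2 : 2*j ≤ max j (2*j) := le_max_right _ _
                         have := ℓ.isLt; omega⟩
      = vbot j (ZB2 (3*p+2+(ℓ:ℕ)%3)) ⟨(ℓ:ℕ)/3, by have := ℓ.isLt; omega⟩ from rfl]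
  rw [B2 hi hj hij hFS s1 s2 b1 b2 p (ℓ:ℕ) hp ℓ.isLt]
  rw [Pi.zero_apply, zero_add]

lemma C3 (p : ℕ) (hp : p < F) (ℓ : Fin i) :
    vtop i (YF2 (3*p+5)) ℓ
      = s1 ⟨4*i*p + 0*i + ℓ, idx4_lt p 0 hp (by omega) ℓ ℓ.isLt⟩
        + s2 ⟨4*i*p + 0*i + ℓ, idx4_lt p 0 hp (by omega) ℓ ℓ.isLt⟩
        + s1 ⟨4*i*p + 1*i + ℓ, idx4_lt p 1 hp (by omega) ℓ ℓ.isLt⟩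
        + s2 ⟨4*i*p + 1*i + ℓ, idx4_lt p 1 hp (by omega) ℓ ℓ.isLt⟩ := by
  have e0 : ¬ ((3*p+5) % 3 = 0) := by omega
  have e1 : ¬ ((3*p+5) % 3 = 1) := by omega
  have hp' : 1 ≤ (3*p+5)/3 ∧ (3*p+5)/3 - 1 < F := ⟨by omega, by omega⟩
  have ep : (3*p+5)/3 - 1 = p := by omega
  rw [show YF2 (3*p+5) = (chOut i (2*i) (XX (3*p+5)).1 (XX (3*p+5)).2.1).2 from rfl]
  rw [chOut2_top, X_unfold]
  dsimp only
  rw [f2d, dif_neg e0, dif_neg e1, dif_pos hp', vtop_vpack]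
  simp only [ep]
  rw [show rZB2 i j F S hi hj hij hFS s1 s2 b1 b2 (3*p+2+(ℓ:ℕ)%3)
        ⟨j + (ℓ:ℕ)/3, by have h2 : 2*j ≤ max j (2*j) := le_max_right _ _
                         have := ℓ.isLt; omega⟩
      = vbot j (ZB2 (3*p+2+(ℓ:ℕ)%3)) ⟨(ℓ:ℕ)/3, by have := ℓ.isLt; omega⟩ from rfl]
  rw [B2 hi hj hij hFS s1 s2 b1 b2 p (ℓ:ℕ) hp ℓ.isLt]

lemma C4 (p : ℕ) (hp : p < F) (ℓ : Fin i) :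
    vbot i (YF2 (3*p+5)) ℓ
      = s2 ⟨4*i*p + 3*i + ℓ, idx4_lt p 3 hp (by omega) ℓ ℓ.isLt⟩
        + s1 ⟨4*i*p + 3*i + ℓ, idx4_lt p 3 hp (by omega) ℓ ℓ.isLt⟩
        + s2 ⟨4*i*p + 2*i + ℓ, idx4_lt p 2 hp (by omega) ℓ ℓ.isLt⟩
        + s1 ⟨4*i*p + 2*i + ℓ, idx4_lt p 2 hp (by omega) ℓ ℓ.isLt⟩ := by
  have e0 : ¬ ((3*p+5) % 3 = 0) := by omega
  have e1 : ¬ ((3*p+5) % 3 = 1) := by omega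
  have hp' : 1 ≤ (3*p+5)/3 ∧ (3*p+5)/3 - 1 < F := ⟨by omega, by omega⟩
  have ep : (3*p+5)/3 - 1 = p := by omega
  rw [show YF2 (3*p+5) = (chOut i (2*i) (XX (3*p+5)).1 (XX (3*p+5)).2.1).2 from rfl]
  rw [chOut2_bot, X_unfold]
  dsimp only
  rw [f2d, dif_neg e0, dif_neg e1, dif_pos hp', vbot_vpack]
  rw [f1d, dif_neg e0, dif_neg e1, dif_pos hp', vtop_vpack]
  simp only [ep]
  rw [show rZB1 i j F S hi hj hij hFS s1 s2 b1 b2 (3*p+2+(ℓ:ℕ)%3)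
        ⟨j + (ℓ:ℕ)/3, by have h2 : 2*j ≤ max j (2*j) := le_max_right _ _
                         have := ℓ.isLt; omega⟩
      = vbot j (ZB1 (3*p+2+(ℓ:ℕ)%3)) ⟨(ℓ:ℕ)/3, by have := ℓ.isLt; omega⟩ from rfl]
  rw [B1 hi hj hij hFS s1 s2 b1 b2 p (ℓ:ℕ) hp ℓ.isLt]
  rw [Pi.zero_apply, zero_add]
lemma D1 (m : Fin ((3*j-i)*S)) :
    vbot j (ZB1 (3*((m:ℕ)/(3*j-i)) + (((m:ℕ)%(3*j-i)+i)%3+2)%3))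
      ⟨((m:ℕ)%(3*j-i)+i)/3, by
        have hm := m.isLt
        have hD : 0 < 3*j - i := by
          rcases Nat.eq_zero_or_pos (3*j-i) with h|h
          · simp [h] at hm
          · exact h
        have := Nat.mod_lt (m:ℕ) hD
        omega⟩
    = b1 m + b2 m := by
  have hm := m.isLt
  have hD : 0 < 3*j - i := by
    rcases Nat.eq_zero_or_pos (3*j-i) with h|h
    · simp [h] at hm
    · exact h
  have hmod : (m:ℕ)%(3*j-i) < 3*j-i := Nat.mod_lt _ hD
  have hgS : (m:ℕ)/(3*j-i) < S := by
    rw [Nat.div_lt_iff_lt_mul hD]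
    calc (m:ℕ) < (3*j-i)*S := hm
    _ = S*(3*j-i) := by ring
  have hdm := Nat.div_add_mod (m:ℕ) (3*j-i)
  set g := (m:ℕ)/(3*j-i) with hg0
  set w := (m:ℕ)%(3*j-i) with hw0
  rw [show ZB1 (3*g + ((w+i)%3+2)%3)
      = (chOut j (2*j) (XX (3*g + ((w+i)%3+2)%3)).2.2.1
          (XX (3*g + ((w+i)%3+2)%3)).2.2.2).1 from rfl]
  rw [chOut1_bot, X_unfold]
  dsimp only
  rw [ft1d, ft2d, vbot_vpack, vtop_vpack]
  dsimp only
  have hceq : 3*((w+i)/3) + (3*g + ((w+i)%3+2)%3 + 1) % 3 = w + i := by omega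
  simp only [← hw0, hceq]
  rw [dif_neg (show ¬ (w + i < i) by omega)]
  rw [dif_pos (show 3*g + ((w+i)%3+2)%3 < 3*S by omega)]
  rw [dif_neg (show ¬ (w + i < i) by omega)]
  rw [dif_pos (show 3*g + ((w+i)%3+2)%3 < 3*S by omega)]
  have hT3 : (3*g + ((w+i)%3+2)%3)/3 = g := by omega
  simp only [hT3]
  have hcomm : g*(3*j-i) = (3*j-i)*g := by ring
  have hidx : g*(3*j-i) + (w + i - i) = (m:ℕ) := by omega
  rw [show (⟨g*(3*j-i) + (w + i - i), by
        have h4 : g*(3*j-i) + (3*j-i) ≤ S*(3*j-i) := by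
          calc g*(3*j-i) + (3*j-i) = (g+1)*(3*j-i) := by ring
          _ ≤ S*(3*j-i) := Nat.mul_le_mul_right _ (by omega)
        have h5 : S*(3*j-i) = (3*j-i)*S := by ring
        omega⟩ : Fin ((3*j-i)*S)) = m from Fin.ext hidx]

lemma D2 (m : Fin ((3*j-i)*S)) :
    vbot j (ZB2 (3*((m:ℕ)/(3*j-i)) + (((m:ℕ)%(3*j-i)+i)%3+2)%3))
      ⟨((m:ℕ)%(3*j-i)+i)/3, by
        have hm := m.isLt
        have hD : 0 < 3*j - i := by
          rcases Nat.eq_zero_or_pos (3*j-i) with h|h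
          · simp [h] at hm
          · exact h
        have := Nat.mod_lt (m:ℕ) hD
        omega⟩
    = b2 m + b1 m := by
  have hm := m.isLt
  have hD : 0 < 3*j - i := by
    rcases Nat.eq_zero_or_pos (3*j-i) with h|h
    · simp [h] at hm
    · exact h
  have hmod : (m:ℕ)%(3*j-i) < 3*j-i := Nat.mod_lt _ hD
  have hgS : (m:ℕ)/(3*j-i) < S := by
    rw [Nat.div_lt_iff_lt_mul hD]
    calc (m:ℕ) < (3*j-i)*S := hm
    _ = S*(3*j-i) := by ring
  have hdm := Nat.div_add_mod (m:ℕ) (3*j-i)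
  set g := (m:ℕ)/(3*j-i) with hg0
  set w := (m:ℕ)%(3*j-i) with hw0
  rw [show ZB2 (3*g + ((w+i)%3+2)%3)
      = (chOut j (2*j) (XX (3*g + ((w+i)%3+2)%3)).2.2.1
          (XX (3*g + ((w+i)%3+2)%3)).2.2.2).2 from rfl]
  rw [chOut2_bot, X_unfold]
  dsimp only
  rw [ft1d, ft2d, vbot_vpack, vtop_vpack]
  dsimp only
  have hceq : 3*((w+i)/3) + (3*g + ((w+i)%3+2)%3 + 1) % 3 = w + i := by omega
  simp only [← hw0, hceq]
  rw [dif_neg (show ¬ (w + i < i) by omega)]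
  rw [dif_pos (show 3*g + ((w+i)%3+2)%3 < 3*S by omega)]
  rw [dif_neg (show ¬ (w + i < i) by omega)]
  rw [dif_pos (show 3*g + ((w+i)%3+2)%3 < 3*S by omega)]
  have hT3 : (3*g + ((w+i)%3+2)%3)/3 = g := by omega
  simp only [hT3]
  have hcomm : g*(3*j-i) = (3*j-i)*g := by ring
  have hidx : g*(3*j-i) + (w + i - i) = (m:ℕ) := by omega
  rw [show (⟨g*(3*j-i) + (w + i - i), by
        have h4 : g*(3*j-i) + (3*j-i) ≤ S*(3*j-i) := by
          calc g*(3*j-i) + (3*j-i) = (g+1)*(3*j-i) := by ring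
          _ ≤ S*(3*j-i) := Nat.mul_le_mul_right _ (by omega)
        have h5 : S*(3*j-i) = (3*j-i)*S := by ring
        omega⟩ : Fin ((3*j-i)*S)) = m from Fin.ext hidx]

lemma recvF1_eq :
    recvF1 (myCode i j F S hi hj hij hFS) s1 s2 b1 b2 = fun τ : Fin (3*S) => YF1 (τ:ℕ) := by
  funext τ
  unfold recvF1
  exact congrArg (fun x : Sig i (2*i) j (2*j) => (chOut i (2*i) x.1 x.2.1).1)
    (hist_traj (myCode i j F S hi hj hij hFS) s1 s2 b1 b2 _ τ)

lemma recvF2_eq :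
    recvF2 (myCode i j F S hi hj hij hFS) s1 s2 b1 b2 = fun τ : Fin (3*S) => YF2 (τ:ℕ) := by
  funext τ
  unfold recvF2
  exact congrArg (fun x : Sig i (2*i) j (2*j) => (chOut i (2*i) x.1 x.2.1).2)
    (hist_traj (myCode i j F S hi hj hij hFS) s1 s2 b1 b2 _ τ)

lemma recvB1_eq :
    recvB1 (myCode i j F S hi hj hij hFS) s1 s2 b1 b2 = fun τ : Fin (3*S) => ZB1 (τ:ℕ) := by
  funext τ
  unfold recvB1
  exact congrArg (fun x : Sig i (2*i) j (2*j) => (chOut j (2*j) x.2.2.1 x.2.2.2).1)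
    (hist_traj (myCode i j F S hi hj hij hFS) s1 s2 b1 b2 _ τ)

lemma recvB2_eq :
    recvB2 (myCode i j F S hi hj hij hFS) s1 s2 b1 b2 = fun τ : Fin (3*S) => ZB2 (τ:ℕ) := by
  funext τ
  unfold recvB2
  exact congrArg (fun x : Sig i (2*i) j (2*j) => (chOut j (2*j) x.2.2.1 x.2.2.2).2)
    (hist_traj (myCode i j F S hi hj hij hFS) s1 s2 b1 b2 _ τ)
lemma zmodA : ∀ a b c d : ZMod 2, a+b+c+d+(a+b) = c+d := by decide
lemma zmodB : ∀ a b c d : ZMod 2, a+b+c+d+(d+c) = a+b := by decide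
lemma zmodC : ∀ a b c d : ZMod 2, a+b+c+d+(d+c) = b+a := by decide
lemma zmodD : ∀ a b c d : ZMod 2, a+b+c+d+(a+b) = d+c := by decide

theorem dect1_correct :
    (myCode i j F S hi hj hij hFS).dect1
      (recvF1 (myCode i j F S hi hj hij hFS) s1 s2 b1 b2) = fun k => s1 k + s2 k := by
  funext k
  rw [recvF1_eq]
  show dect1d i F S hi hFS (fun τ : Fin (3*S) => YF1 (τ:ℕ)) k = _
  have hik : (k:ℕ) < 4*i*F := k.isLt
  have hr : (k:ℕ)/(4*i) < F := by
    rw [Nat.div_lt_iff_lt_mul (by omega)]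
    calc (k:ℕ) < 4*i*F := hik
    _ = F*(4*i) := by ring
  have hℓ : ((k:ℕ) % (4*i)) % i < i := Nat.mod_lt _ hi
  have d1 := Nat.div_add_mod (k:ℕ) (4*i)
  have d2 := Nat.div_add_mod ((k:ℕ)%(4*i)) i
  unfold dect1d
  dsimp only
  by_cases hb0 : ((k:ℕ) % (4*i))/i = 0
  · rw [if_pos hb0]
    rw [hb0] at d2
    have hx : 4*i*((k:ℕ)/(4*i)) + 0*i + ((k:ℕ)%(4*i))%i = (k:ℕ) := by omega
    show vbot i (YF1 (3*((k:ℕ)/(4*i)))) ⟨((k:ℕ)%(4*i))%i, hℓ⟩ = _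
    rw [A2 hi hj hij hFS s1 s2 b1 b2 ((k:ℕ)/(4*i)) hr ⟨((k:ℕ)%(4*i))%i, hℓ⟩]
    congr 1 <;> exact congrArg _ (Fin.ext hx)
  · rw [if_neg hb0]
    by_cases hb1 : ((k:ℕ) % (4*i))/i = 1
    · rw [if_pos hb1]
      rw [hb1] at d2
      have hx : 4*i*((k:ℕ)/(4*i)) + 1*i + ((k:ℕ)%(4*i))%i = (k:ℕ) := by omega
      show vbot i (YF1 (3*((k:ℕ)/(4*i))+5)) ⟨((k:ℕ)%(4*i))%i, hℓ⟩
        + vbot i (YF1 (3*((k:ℕ)/(4*i)))) ⟨((k:ℕ)%(4*i))%i, hℓ⟩ = _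
      rw [C2 hi hj hij hFS s1 s2 b1 b2 ((k:ℕ)/(4*i)) hr ⟨((k:ℕ)%(4*i))%i, hℓ⟩,
          A2 hi hj hij hFS s1 s2 b1 b2 ((k:ℕ)/(4*i)) hr ⟨((k:ℕ)%(4*i))%i, hℓ⟩,
          zmodA]
      congr 1 <;> exact congrArg _ (Fin.ext hx)
    · rw [if_neg hb1]
      by_cases hb2 : ((k:ℕ) % (4*i))/i = 2
      · rw [if_pos hb2]
        rw [hb2] at d2
        have hx : 4*i*((k:ℕ)/(4*i)) + 2*i + ((k:ℕ)%(4*i))%i = (k:ℕ) := by omega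
        show vbot i (YF1 (3*((k:ℕ)/(4*i))+1)) ⟨((k:ℕ)%(4*i))%i, hℓ⟩ = _
        rw [A6 hi hj hij hFS s1 s2 b1 b2 ((k:ℕ)/(4*i)) hr ⟨((k:ℕ)%(4*i))%i, hℓ⟩]
        congr 1 <;> exact congrArg _ (Fin.ext hx)
      · rw [if_neg hb2]
        have hlt4 : ((k:ℕ) % (4*i))/i < 4 := by
          rw [Nat.div_lt_iff_lt_mul (by omega)]
          exact Nat.mod_lt _ (by omega)
        have hb3 : ((k:ℕ) % (4*i))/i = 3 := by
          generalize hq : ((k:ℕ) % (4*i))/i = q at hb0 hb1 hb2 hlt4 ⊢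
          omega
        rw [hb3] at d2
        have hx : 4*i*((k:ℕ)/(4*i)) + 3*i + ((k:ℕ)%(4*i))%i = (k:ℕ) := by omega
        show vtop i (YF1 (3*((k:ℕ)/(4*i))+5)) ⟨((k:ℕ)%(4*i))%i, hℓ⟩
          + vbot i (YF1 (3*((k:ℕ)/(4*i))+1)) ⟨((k:ℕ)%(4*i))%i, hℓ⟩ = _
        rw [C1 hi hj hij hFS s1 s2 b1 b2 ((k:ℕ)/(4*i)) hr ⟨((k:ℕ)%(4*i))%i, hℓ⟩,
            A6 hi hj hij hFS s1 s2 b1 b2 ((k:ℕ)/(4*i)) hr ⟨((k:ℕ)%(4*i))%i, hℓ⟩,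
            zmodC]
        congr 1 <;> exact congrArg _ (Fin.ext hx)

theorem dect2_correct :
    (myCode i j F S hi hj hij hFS).dect2
      (recvF2 (myCode i j F S hi hj hij hFS) s1 s2 b1 b2) = fun k => s1 k + s2 k := by
  funext k
  rw [recvF2_eq]
  show dect2d i F S hi hFS (fun τ : Fin (3*S) => YF2 (τ:ℕ)) k = _
  have hik : (k:ℕ) < 4*i*F := k.isLt
  have hr : (k:ℕ)/(4*i) < F := by
    rw [Nat.div_lt_iff_lt_mul (by omega)]
    calc (k:ℕ) < 4*i*F := hik
    _ = F*(4*i) := by ring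
  have hℓ : ((k:ℕ) % (4*i)) % i < i := Nat.mod_lt _ hi
  have d1 := Nat.div_add_mod (k:ℕ) (4*i)
  have d2 := Nat.div_add_mod ((k:ℕ)%(4*i)) i
  unfold dect2d
  dsimp only
  by_cases hb0 : ((k:ℕ) % (4*i))/i = 0
  · rw [if_pos hb0]
    rw [hb0] at d2
    have hx : 4*i*((k:ℕ)/(4*i)) + 0*i + ((k:ℕ)%(4*i))%i = (k:ℕ) := by omega
    show vtop i (YF2 (3*((k:ℕ)/(4*i))+5)) ⟨((k:ℕ)%(4*i))%i, hℓ⟩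
      + vbot i (YF2 (3*((k:ℕ)/(4*i)))) ⟨((k:ℕ)%(4*i))%i, hℓ⟩ = _
    rw [C3 hi hj hij hFS s1 s2 b1 b2 ((k:ℕ)/(4*i)) hr ⟨((k:ℕ)%(4*i))%i, hℓ⟩,
        A4 hi hj hij hFS s1 s2 b1 b2 ((k:ℕ)/(4*i)) hr ⟨((k:ℕ)%(4*i))%i, hℓ⟩,
        zmodB]
    congr 1 <;> exact congrArg _ (Fin.ext hx)
  · rw [if_neg hb0]
    by_cases hb1 : ((k:ℕ) % (4*i))/i = 1
    · rw [if_pos hb1]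
      rw [hb1] at d2
      have hx : 4*i*((k:ℕ)/(4*i)) + 1*i + ((k:ℕ)%(4*i))%i = (k:ℕ) := by omega
      show vbot i (YF2 (3*((k:ℕ)/(4*i)))) ⟨((k:ℕ)%(4*i))%i, hℓ⟩ = _
      rw [A4 hi hj hij hFS s1 s2 b1 b2 ((k:ℕ)/(4*i)) hr ⟨((k:ℕ)%(4*i))%i, hℓ⟩, add_comm]
      congr 1 <;> exact congrArg _ (Fin.ext hx)
    · rw [if_neg hb1]
      by_cases hb2 : ((k:ℕ) % (4*i))/i = 2
      · rw [if_pos hb2]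
        rw [hb2] at d2
        have hx : 4*i*((k:ℕ)/(4*i)) + 2*i + ((k:ℕ)%(4*i))%i = (k:ℕ) := by omega
        show vbot i (YF2 (3*((k:ℕ)/(4*i))+5)) ⟨((k:ℕ)%(4*i))%i, hℓ⟩
          + vbot i (YF2 (3*((k:ℕ)/(4*i))+1)) ⟨((k:ℕ)%(4*i))%i, hℓ⟩ = _
        rw [C4 hi hj hij hFS s1 s2 b1 b2 ((k:ℕ)/(4*i)) hr ⟨((k:ℕ)%(4*i))%i, hℓ⟩,
            A8 hi hj hij hFS s1 s2 b1 b2 ((k:ℕ)/(4*i)) hr ⟨((k:ℕ)%(4*i))%i, hℓ⟩,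
            zmodD]
        congr 1 <;> exact congrArg _ (Fin.ext hx)
      · rw [if_neg hb2]
        have hlt4 : ((k:ℕ) % (4*i))/i < 4 := by
          rw [Nat.div_lt_iff_lt_mul (by omega)]
          exact Nat.mod_lt _ (by omega)
        have hb3 : ((k:ℕ) % (4*i))/i = 3 := by
          generalize hq : ((k:ℕ) % (4*i))/i = q at hb0 hb1 hb2 hlt4 ⊢
          omega
        rw [hb3] at d2
        have hx : 4*i*((k:ℕ)/(4*i)) + 3*i + ((k:ℕ)%(4*i))%i = (k:ℕ) := by omega
        show vbot i (YF2 (3*((k:ℕ)/(4*i))+1)) ⟨((k:ℕ)%(4*i))%i, hℓ⟩ = _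
        rw [A8 hi hj hij hFS s1 s2 b1 b2 ((k:ℕ)/(4*i)) hr ⟨((k:ℕ)%(4*i))%i, hℓ⟩, add_comm]
        congr 1 <;> exact congrArg _ (Fin.ext hx)

theorem dec1_correct :
    (myCode i j F S hi hj hij hFS).dec1
      (recvB1 (myCode i j F S hi hj hij hFS) s1 s2 b1 b2) = fun m => b1 m + b2 m := by
  funext m
  rw [recvB1_eq]
  show dec1d i j S hj hij (fun τ : Fin (3*S) => ZB1 (τ:ℕ)) m = _
  unfold dec1d
  dsimp only
  exact D1 hi hj hij hFS s1 s2 b1 b2 m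

theorem dec2_correct :
    (myCode i j F S hi hj hij hFS).dec2
      (recvB2 (myCode i j F S hi hj hij hFS) s1 s2 b1 b2) = fun m => b1 m + b2 m := by
  funext m
  rw [recvB2_eq]
  show dec1d i j S hj hij (fun τ : Fin (3*S) => ZB2 (τ:ℕ)) m = _
  unfold dec1d
  dsimp only
  rw [show b1 m + b2 m = b2 m + b1 m from add_comm _ _]
  exact D2 hi hj hij hFS s1 s2 b1 b2 m
lemma probOf_zero {m n mt nt : ℕ} (C : Code m n mt nt) (E : SrcSpace C → Prop)
    (h : ∀ ω, ¬ E ω) : probOf C E = 0 := by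
  rw [probOf]
  have h2 : ∀ (inst : DecidablePred E),
      (@Finset.filter _ E inst Finset.univ) = ∅ :=
    fun _ => Finset.filter_false_of_mem (fun ω _ => h ω)
  rw [h2 _, Finset.card_empty]
  simp

lemma errF1_zero : errF1 (myCode i j F S hi hj hij hFS) = 0 := by
  rw [errF1]
  apply probOf_zero
  intro ω
  exact not_not_intro (dect1_correct hi hj hij hFS ω.1 ω.2.1 ω.2.2.1 ω.2.2.2)

lemma errF2_zero : errF2 (myCode i j F S hi hj hij hFS) = 0 := by
  rw [errF2]
  apply probOf_zero
  intro ω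
  exact not_not_intro (dect2_correct hi hj hij hFS ω.1 ω.2.1 ω.2.2.1 ω.2.2.2)

lemma errB1_zero : errB1 (myCode i j F S hi hj hij hFS) = 0 := by
  rw [errB1]
  apply probOf_zero
  intro ω
  exact not_not_intro (dec1_correct hi hj hij hFS ω.1 ω.2.1 ω.2.2.1 ω.2.2.2)

lemma errB2_zero : errB2 (myCode i j F S hi hj hij hFS) = 0 := by
  rw [errB2]
  apply probOf_zero
  intro ω
  exact not_not_intro (dec2_correct hi hj hij hFS ω.1 ω.2.1 ω.2.2.1 ω.2.2.2)

end Eval2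

section Achieve

lemma achievable_pt (i j P : ℕ) (hi : 0 < i) (hj : 0 < j) (hij : i ≤ 3*j) :
    Achievable i (2*i) j (2*j) ((4*i*P : ℝ)/(3*(P+1))) ((j:ℝ) - 1/3*(i:ℝ)) := by
  have hFS : ∀ ν : ℕ, P*(ν+1) < (P+1)*(ν+1) := by
    intro ν
    have h1 : P*(ν+1) + (ν+1) = (P+1)*(ν+1) := by ring
    omega
  refine ⟨fun ν => myCode i j (P*(ν+1)) ((P+1)*(ν+1)) hi hj hij (hFS ν),
    ?_, ?_, ?_, ?_, ?_, ?_, ?_⟩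
  · apply Filter.tendsto_atTop_mono (f := fun ν : ℕ => ν) _ Filter.tendsto_id
    intro ν
    show ν ≤ (myCode i j (P*(ν+1)) ((P+1)*(ν+1)) hi hj hij (hFS ν)).N
    show ν ≤ 3*((P+1)*(ν+1))
    have h1 : 1*(ν+1) ≤ (P+1)*(ν+1) := Nat.mul_le_mul_right _ (by omega)
    omega
  · intro ν
    show ((4*i*(P*(ν+1)) : ℕ) : ℝ)/((3*((P+1)*(ν+1)) : ℕ) : ℝ) = _
    have hνpos : (0:ℝ) < (ν:ℝ)+1 := by positivity
    have hPpos : (0:ℝ) < (P:ℝ)+1 := by positivity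
    push_cast
    rw [div_eq_div_iff (by positivity) (by positivity)]
    ring
  · intro ν
    show (((3*j-i)*((P+1)*(ν+1)) : ℕ) : ℝ)/((3*((P+1)*(ν+1)) : ℕ) : ℝ) = _
    rw [div_eq_iff (by positivity)]
    push_cast [Nat.cast_sub hij]
    ring
  · have : (fun ν => errF1 (myCode i j (P*(ν+1)) ((P+1)*(ν+1)) hi hj hij (hFS ν)))
        = fun _ => (0:ℝ) := funext fun ν => errF1_zero hi hj hij (hFS ν)
    rw [this]; exact tendsto_const_nhds
  · have : (fun ν => errF2 (myCode i j (P*(ν+1)) ((P+1)*(ν+1)) hi hj hij (hFS ν)))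
        = fun _ => (0:ℝ) := funext fun ν => errF2_zero hi hj hij (hFS ν)
    rw [this]; exact tendsto_const_nhds
  · have : (fun ν => errB1 (myCode i j (P*(ν+1)) ((P+1)*(ν+1)) hi hj hij (hFS ν)))
        = fun _ => (0:ℝ) := funext fun ν => errB1_zero hi hj hij (hFS ν)
    rw [this]; exact tendsto_const_nhds
  · have : (fun ν => errB2 (myCode i j (P*(ν+1)) ((P+1)*(ν+1)) hi hj hij (hFS ν)))
        = fun _ => (0:ℝ) := funext fun ν => errB2_zero hi hj hij (hFS ν)
    rw [this]; exact tendsto_const_nhds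

end Achieve

end TwoWay

open TwoWay in
/-- Lemma 3(i): for the pair `(m,n) = (1,2)^i = (i,2i)` and
`(m̃,ñ) = (1,2)^j = (j,2j)` with `i/3 ≤ j`, the rate pair
`((4/3)i, j - (1/3)i)` belongs to the capacity region. -/
theorem lemma3_i (i j : ℕ) (hi : 0 < i) (hj : 0 < j) (hij : (i : ℝ) / 3 ≤ (j : ℝ)) :
    ((4 / 3 * (i : ℝ), (j : ℝ) - 1 / 3 * (i : ℝ)) : ℝ × ℝ) ∈
      CapacityRegion i (2 * i) j (2 * j) := by
  have hij3 : i ≤ 3*j := by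
    rw [div_le_iff₀ (by norm_num : (0:ℝ) < 3)] at hij
    have : (i:ℝ) ≤ ((3*j : ℕ) : ℝ) := by push_cast; linarith
    exact_mod_cast this
  have hone : Filter.Tendsto (fun P : ℕ => (1:ℝ)/(P+1)) Filter.atTop (nhds 0) :=
    tendsto_one_div_add_atTop_nhds_zero_nat
  have h1 : Filter.Tendsto (fun P : ℕ => ((4*i*P : ℝ)/(3*(P+1)))) Filter.atTop
      (nhds (4/3*(i:ℝ))) := by
    have h2 : Filter.Tendsto (fun P : ℕ => 4/3*(i:ℝ)*(1 - 1/(P+1))) Filter.atTop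
        (nhds (4/3*(i:ℝ)*(1-0))) :=
      (tendsto_const_nhds.sub hone).const_mul _
    rw [show (4:ℝ)/3*(i:ℝ)*(1-0) = 4/3*(i:ℝ) by ring] at h2
    refine h2.congr fun P => ?_
    have hP : ((P:ℝ)+1) ≠ 0 := by positivity
    field_simp
    ring
  have htend : Filter.Tendsto
      (fun P : ℕ => (((4*i*P : ℝ)/(3*(P+1))), (j:ℝ) - 1/3*(i:ℝ))) Filter.atTop
      (nhds ((4/3*(i:ℝ), (j:ℝ) - 1/3*(i:ℝ)) : ℝ × ℝ)) :=
    h1.prodMk_nhds tendsto_const_nhds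
  exact mem_closure_of_tendsto htend
    (Filter.Eventually.of_forall fun P => achievable_pt i j P hi hj hij3)
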